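/- Let d ≥ 2 be an integer and let g : ℂ² → ℂ² be a map satisfying g(G(u,v)) = G(T_d(u), T_d(v)) for all u, v ∈ ℂ. Then the set of bounded orbits K(g) = {z ∈ ℂ² : the sequence (gᵏ(z))_{k≥1} of iterates is bounded} equals {G(u,v) : u, v ∈ [−2,2] ⊂ ℝ}, i.e. the image under G of the real square [−2,2] × [−2,2]. -/

import Mathlib

/-- The polynomial parametrization of ℂ²/D₃ ≅ ℂ². -/
noncomputable def G (u v : ℂ) : ℂ × ℂ :=
  (1 + u * v + v ^ 2, (-2 + u ^ 2 + 6 * v ^ 2 + u * v * (3 + v ^ 2)) / 2)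

/-- Every complex number can be written as `s + s⁻¹` with `‖s‖ ≥ 1`. -/
lemma KG_exists_s (u : ℂ) : ∃ s : ℂ, s ≠ 0 ∧ 1 ≤ ‖s‖ ∧ s + s⁻¹ = u := by
  obtain ⟨r, hr⟩ := IsAlgClosed.exists_pow_nat_eq ((u/2)^2 - 1) (n := 2) (by norm_num)
  set s := u/2 + r with hs
  have key : s * (u - s) = 1 := by rw [hs]; linear_combination -hr
  have hs0 : s ≠ 0 := by intro h; rw [h, zero_mul] at key; exact one_ne_zero key.symm
  have hinv : u - s = s⁻¹ := eq_inv_of_mul_eq_one_left (by rw [mul_comm]; exact key)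
  have hsum : s + s⁻¹ = u := by rw [← hinv]; ring
  rcases le_or_gt 1 ‖s‖ with h | h
  · exact ⟨s, hs0, h, hsum⟩
  · refine ⟨s⁻¹, inv_ne_zero hs0, ?_, by rw [inv_inv, add_comm]; exact hsum⟩
    rw [norm_inv]
    exact (one_le_inv₀ (norm_pos_iff.mpr hs0)).mpr h.le

/-- Iterating the Chebyshev polynomial on `s + s⁻¹`. -/
lemma KG_cheb_iter (d : ℕ) (T : Polynomial ℤ)
    (hT : ∀ s : ℂ, s ≠ 0 → Polynomial.aeval (s + s⁻¹) T = s ^ (d : ℤ) + s ^ (-(d : ℤ)))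
    (s : ℂ) (hs : s ≠ 0) (k : ℕ) :
    (fun x : ℂ => Polynomial.aeval x T)^[k] (s + s⁻¹) = s ^ (d ^ k) + (s ^ (d ^ k))⁻¹ := by
  induction k with
  | zero => simp
  | succ k ih =>
    rw [Function.iterate_succ_apply', ih]
    have h := hT (s ^ (d ^ k)) (pow_ne_zero _ hs)
    simp only [zpow_natCast, zpow_neg] at h
    rw [h, ← pow_mul, ← pow_succ]

/-- Points of the real interval `[-2,2]` are of the form `s + s⁻¹` with `‖s‖ = 1`. -/
lemma KG_exists_unit (u : ℝ) (hu : u ∈ Set.Icc (-2:ℝ) 2) :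
    ∃ s : ℂ, ‖s‖ = 1 ∧ s + s⁻¹ = (u : ℂ) := by
  obtain ⟨h1, h2⟩ := hu
  refine ⟨Complex.exp ((Real.arccos (u/2) : ℂ) * Complex.I), ?_, ?_⟩
  · exact Complex.norm_exp_ofReal_mul_I _
  · rw [← Complex.exp_neg, ← neg_mul]
    rw [Complex.exp_mul_I, Complex.exp_mul_I]
    rw [Complex.cos_neg, Complex.sin_neg]
    have hc : Complex.cos ((Real.arccos (u/2) : ℂ)) = ((u/2 : ℝ) : ℂ) := by
      rw [← Complex.ofReal_cos, Real.cos_arccos (by linarith) (by linarith)]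
    rw [hc]
    push_cast
    ring

/-- Explicit properness bound for the map `G`. -/
noncomputable def KG_P (C : ℝ) : ℝ := 6 + 5*C + (2+C)*(C^2+6*C+8) + (C^2+6*C+8)^2

lemma KG_prop_bound (C : ℝ) (hC : 0 ≤ C) (u v : ℂ)
    (h1 : ‖1 + u*v + v^2‖ ≤ C)
    (h2 : ‖(-2 + u^2 + 6*v^2 + u*v*(3+v^2))/2‖ ≤ C) :
    ‖u‖ ≤ KG_P C ∧ ‖v‖ ≤ KG_P C := by
  set a := 1 + u*v + v^2 with ha
  set b := (-2 + u^2 + 6*v^2 + u*v*(3+v^2))/2 with hb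
  have id1 : v^6 = (3+a)*v^4 - (2*b+3-a)*v^2 + (a-1)^2 := by rw [ha, hb]; ring
  have id2 : u^2 = (2*b+5-3*a) - (2+a)*v^2 + v^4 := by rw [ha, hb]; ring
  set V := ‖v‖ with hV
  have hV0 : 0 ≤ V := norm_nonneg v
  have n1 : ‖(3:ℂ)+a‖ ≤ 3 + C := by
    calc ‖(3:ℂ)+a‖ ≤ ‖(3:ℂ)‖ + ‖a‖ := norm_add_le _ _
    _ ≤ 3 + C := by rw [show ‖(3:ℂ)‖ = 3 by norm_num]; linarith
  have n2 : ‖2*b+3-a‖ ≤ 3*C + 3 := by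
    calc ‖2*b+3-a‖ ≤ ‖2*b+3‖ + ‖a‖ := norm_sub_le _ _
    _ ≤ ‖2*b‖ + ‖(3:ℂ)‖ + ‖a‖ := by gcongr; exact norm_add_le _ _
    _ ≤ 2*C + 3 + C := by
        rw [norm_mul, show ‖(2:ℂ)‖ = 2 by norm_num, show ‖(3:ℂ)‖ = 3 by norm_num]
        linarith
    _ = 3*C + 3 := by ring
  have n3 : ‖a - 1‖ ≤ C + 1 := by
    calc ‖a-1‖ ≤ ‖a‖ + ‖(1:ℂ)‖ := norm_sub_le _ _
    _ ≤ C + 1 := by rw [norm_one]; linarith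
  have n4 : ‖2*b+5-3*a‖ ≤ 5*C + 5 := by
    calc ‖2*b+5-3*a‖ ≤ ‖2*b+5‖ + ‖3*a‖ := norm_sub_le _ _
    _ ≤ ‖2*b‖ + ‖(5:ℂ)‖ + ‖3*a‖ := by gcongr; exact norm_add_le _ _
    _ ≤ 2*C + 5 + 3*C := by
        rw [norm_mul, norm_mul, show ‖(2:ℂ)‖ = 2 by norm_num,
          show ‖(5:ℂ)‖ = 5 by norm_num, show ‖(3:ℂ)‖ = 3 by norm_num]
        linarith
    _ = 5*C + 5 := by ring
  have n5 : ‖(2:ℂ)+a‖ ≤ 2 + C := by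
    calc ‖(2:ℂ)+a‖ ≤ ‖(2:ℂ)‖ + ‖a‖ := norm_add_le _ _
    _ ≤ 2 + C := by rw [show ‖(2:ℂ)‖ = 2 by norm_num]; linarith
  have hV6 : V^6 ≤ (3+C)*V^4 + (3*C+3)*V^2 + (C+1)^2 := by
    have : ‖v^6‖ ≤ ‖(3+a)*v^4‖ + ‖(2*b+3-a)*v^2‖ + ‖(a-1)^2‖ := by
      rw [id1]
      calc ‖(3+a)*v^4 - (2*b+3-a)*v^2 + (a-1)^2‖
          ≤ ‖(3+a)*v^4 - (2*b+3-a)*v^2‖ + ‖(a-1)^2‖ := norm_add_le _ _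
        _ ≤ ‖(3+a)*v^4‖ + ‖(2*b+3-a)*v^2‖ + ‖(a-1)^2‖ := by
            gcongr; exact norm_sub_le _ _
    rw [norm_pow, norm_mul, norm_mul, norm_pow, norm_pow, norm_pow] at this
    calc V^6 ≤ ‖3+a‖*V^4 + ‖2*b+3-a‖*V^2 + ‖a-1‖^2 := this
      _ ≤ (3+C)*V^4 + (3*C+3)*V^2 + (C+1)^2 := by
          gcongr
  have hBv : V^2 ≤ C^2+6*C+8 := by
    rcases le_or_gt V 1 with h | h
    · nlinarith
    · nlinarith [pow_pos (lt_trans zero_lt_one h) 4, sq_nonneg V,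
        pow_le_pow_right₀ h.le (show 2 ≤ 4 by norm_num),
        one_le_pow₀ (a := V) (n := 4) h.le, one_le_pow₀ (a := V) (n := 2) h.le]
  have hu2 : ‖u‖^2 ≤ 5*C+5 + (2+C)*(C^2+6*C+8) + (C^2+6*C+8)^2 := by
    have : ‖u^2‖ ≤ ‖2*b+5-3*a‖ + ‖(2+a)*v^2‖ + ‖v^4‖ := by
      rw [id2]
      calc ‖(2*b+5-3*a) - (2+a)*v^2 + v^4‖
          ≤ ‖(2*b+5-3*a) - (2+a)*v^2‖ + ‖v^4‖ := norm_add_le _ _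
        _ ≤ ‖2*b+5-3*a‖ + ‖(2+a)*v^2‖ + ‖v^4‖ := by gcongr; exact norm_sub_le _ _
    rw [norm_pow, norm_mul, norm_pow, norm_pow] at this
    have h4 : V^4 = (V^2)^2 := by ring
    nlinarith [sq_nonneg V, norm_nonneg u, mul_le_mul n5 hBv (by positivity) (by linarith)]
  constructor
  · rcases le_or_gt ‖u‖ 1 with h | h
    · have : (0:ℝ) ≤ 5*C + (2+C)*(C^2+6*C+8) + (C^2+6*C+8)^2 := by positivity
      unfold KG_P; linarith
    · have : ‖u‖ ≤ ‖u‖^2 := by nlinarith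
      unfold KG_P; linarith
  · rcases le_or_gt V 1 with h | h
    · have : (0:ℝ) ≤ 5*C + (2+C)*(C^2+6*C+8) + (C^2+6*C+8)^2 := by positivity
      unfold KG_P; linarith
    · have h2' : V ≤ V^2 := by nlinarith
      have : (0:ℝ) ≤ 5*C + (1+C)*(C^2+6*C+8) + (C^2+6*C+8)^2 := by positivity
      unfold KG_P; nlinarith

/-- `G` is surjective. -/
lemma KG_G_surj (a b : ℂ) : ∃ u v : ℂ, G u v = (a, b) := by
  by_cases ha : a = 1
  · obtain ⟨u, hu⟩ := IsAlgClosed.exists_pow_nat_eq (2*b+2) (n := 2) (by norm_num)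
    refine ⟨u, 0, ?_⟩
    simp only [G, ha, Prod.mk.injEq]
    constructor
    · ring
    · linear_combination hu / 2
  · obtain ⟨w, hw⟩ : ∃ w : ℂ, w^3 - (3+a)*w^2 + (2*b+3-a)*w - (a-1)^2 = 0 := by
      obtain ⟨z, hz⟩ := Complex.exists_root (f := Polynomial.C (1:ℂ) * Polynomial.X^3
        + Polynomial.C (-(3+a)) * Polynomial.X^2 + Polynomial.C (2*b+3-a) * Polynomial.X
        + Polynomial.C (-((a-1)^2))) (by
          rw [Polynomial.degree_cubic (by norm_num)]; norm_num)
      refine ⟨z, ?_⟩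
      have := hz
      simp only [Polynomial.IsRoot, Polynomial.eval_add, Polynomial.eval_mul,
        Polynomial.eval_pow, Polynomial.eval_C, Polynomial.eval_X] at this
      linear_combination this
    have hw0 : w ≠ 0 := by
      intro h
      rw [h] at hw
      apply ha
      have : (a-1)^2 = 0 := by linear_combination -hw
      have := pow_eq_zero_iff (n := 2) (by norm_num) |>.mp this
      exact sub_eq_zero.mp this
    obtain ⟨v, hv⟩ := IsAlgClosed.exists_pow_nat_eq w (n := 2) (by norm_num)
    have hv0 : v ≠ 0 := by
      intro h; apply hw0; rw [← hv, h]; ring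
    subst hv
    refine ⟨(a-1-v^2)/v, v, ?_⟩
    simp only [G, Prod.mk.injEq]
    constructor
    · field_simp
      ring
    · field_simp
      linear_combination -hw

/-- Crude bound for `G` on the bidisc of radius 2. -/
lemma KG_G_norm_le (x y : ℂ) (hx : ‖x‖ ≤ 2) (hy : ‖y‖ ≤ 2) : ‖G x y‖ ≤ 29 := by
  have hxy : ‖x*y‖ ≤ 4 := by
    rw [norm_mul]
    calc ‖x‖ * ‖y‖ ≤ 2 * 2 := by
          exact mul_le_mul hx hy (norm_nonneg _) (by norm_num)
    _ = 4 := by norm_num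
  have hy2 : ‖y^2‖ ≤ 4 := by
    rw [norm_pow]; nlinarith [norm_nonneg y]
  have hx2 : ‖x^2‖ ≤ 4 := by
    rw [norm_pow]; nlinarith [norm_nonneg x]
  rw [G, Prod.norm_def]
  apply max_le
  · calc ‖1 + x*y + y^2‖ ≤ ‖1 + x*y‖ + ‖y^2‖ := norm_add_le _ _
      _ ≤ ‖(1:ℂ)‖ + ‖x*y‖ + ‖y^2‖ := by gcongr; exact norm_add_le _ _
      _ ≤ 1 + 4 + 4 := by rw [norm_one]; gcongr
      _ ≤ 29 := by norm_num
  · rw [norm_div, show ‖(2:ℂ)‖ = 2 by norm_num]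
    have h3 : ‖(3:ℂ) + y^2‖ ≤ 7 := by
      calc ‖(3:ℂ)+y^2‖ ≤ ‖(3:ℂ)‖ + ‖y^2‖ := norm_add_le _ _
        _ ≤ 3 + 4 := by rw [show ‖(3:ℂ)‖ = 3 by norm_num]; gcongr
        _ = 7 := by norm_num
    have h4 : ‖x*y*(3+y^2)‖ ≤ 28 := by
      rw [norm_mul]
      calc ‖x*y‖ * ‖3+y^2‖ ≤ 4 * 7 := by
            exact mul_le_mul hxy h3 (norm_nonneg _) (by norm_num)
        _ = 28 := by norm_num
    have h6 : ‖(6:ℂ)*y^2‖ ≤ 24 := by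
      rw [norm_mul, show ‖(6:ℂ)‖ = 6 by norm_num]; linarith
    have : ‖-2 + x^2 + 6*y^2 + x*y*(3+y^2)‖ ≤ 58 := by
      calc ‖-2 + x^2 + 6*y^2 + x*y*(3+y^2)‖
          ≤ ‖-2 + x^2 + 6*y^2‖ + ‖x*y*(3+y^2)‖ := norm_add_le _ _
        _ ≤ ‖-2 + x^2‖ + ‖6*y^2‖ + ‖x*y*(3+y^2)‖ := by gcongr; exact norm_add_le _ _
        _ ≤ ‖(-2:ℂ)‖ + ‖x^2‖ + ‖6*y^2‖ + ‖x*y*(3+y^2)‖ := by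
            gcongr; exact norm_add_le _ _
        _ ≤ 2 + 4 + 24 + 28 := by rw [show ‖(-2:ℂ)‖ = 2 by norm_num]; gcongr
        _ = 58 := by norm_num
    linarith

/-- For `d ≥ 2` and `g : ℂ² → ℂ²` satisfying `g(G(u,v)) = G(T_d(u), T_d(v))`, the set
of points with bounded forward orbit equals the image under `G` of `[-2,2] × [-2,2]`. -/
theorem K_set_eq_image_of_square (d : ℕ) (hd : 2 ≤ d) (T : Polynomial ℤ)
    (hT : ∀ s : ℂ, s ≠ 0 → Polynomial.aeval (s + s⁻¹) T = s ^ (d : ℤ) + s ^ (-(d : ℤ)))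
    (g : ℂ × ℂ → ℂ × ℂ)
    (hg : ∀ u v : ℂ, g (G u v) = G (Polynomial.aeval u T) (Polynomial.aeval v T)) :
    {z : ℂ × ℂ | Bornology.IsBounded (Set.range fun k : ℕ => g^[k + 1] z)}
      = {w : ℂ × ℂ | ∃ u v : ℝ, u ∈ Set.Icc (-2 : ℝ) 2 ∧ v ∈ Set.Icc (-2 : ℝ) 2 ∧
          G (u : ℂ) (v : ℂ) = w} := by
  set f : ℂ → ℂ := fun x => Polynomial.aeval x T with hf
  have iterG : ∀ (u v : ℂ) (k : ℕ), g^[k] (G u v) = G (f^[k] u) (f^[k] v) := by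
    intro u v k
    induction k with
    | zero => simp
    | succ k ih =>
      rw [Function.iterate_succ_apply', ih, hg, Function.iterate_succ_apply',
        Function.iterate_succ_apply']
  have cheb : ∀ (s : ℂ), s ≠ 0 → ∀ k : ℕ,
      f^[k] (s + s⁻¹) = s ^ (d ^ k) + (s ^ (d ^ k))⁻¹ := fun s hs k =>
    KG_cheb_iter d T hT s hs k
  ext z
  simp only [Set.mem_setOf_eq]
  constructor
  · intro hb
    obtain ⟨u, v, hz⟩ := KG_G_surj z.1 z.2
    have hz' : G u v = z := by rw [hz]
    obtain ⟨C, hC⟩ := Bornology.IsBounded.exists_norm_le hb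
    have hC' : ∀ k : ℕ, ‖g^[k+1] z‖ ≤ C := fun k => hC _ ⟨k, rfl⟩
    have hC0 : 0 ≤ C := le_trans (norm_nonneg _) (hC' 0)
    obtain ⟨s, hs0, hs1, hsu⟩ := KG_exists_s u
    obtain ⟨t, ht0, ht1, htv⟩ := KG_exists_s v
    have key : ∀ k : ℕ, ‖f^[k+1] u‖ ≤ KG_P C ∧ ‖f^[k+1] v‖ ≤ KG_P C := by
      intro k
      have h := hC' k
      rw [← hz', iterG] at h
      rw [G, Prod.norm_def] at h
      obtain ⟨h1, h2⟩ := max_le_iff.mp h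
      exact KG_prop_bound C hC0 _ _ h1 h2
    have hnorm1 : ∀ s : ℂ, s ≠ 0 → 1 ≤ ‖s‖ →
        (∀ k : ℕ, ‖f^[k+1] (s + s⁻¹)‖ ≤ KG_P C) → ‖s‖ = 1 := by
      intro s hs0 hs1 hbd
      by_contra hne
      have hgt : 1 < ‖s‖ := lt_of_le_of_ne hs1 (Ne.symm hne)
      obtain ⟨n, hn⟩ := pow_unbounded_of_one_lt (KG_P C + 1) hgt
      have hb' := hbd n
      rw [cheb s hs0 (n+1)] at hb'
      set N := d ^ (n+1) with hN
      have hNn : n + 1 ≤ N := by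
        calc n + 1 ≤ 2 ^ (n+1) := (Nat.lt_two_pow_self (n := n+1)).le
          _ ≤ d ^ (n+1) := Nat.pow_le_pow_left hd _
      have e1 : ‖s ^ N‖ = ‖s‖ ^ N := norm_pow _ _
      have e2 : ‖(s ^ N)⁻¹‖ ≤ 1 := by
        rw [norm_inv, e1]
        exact inv_le_one_of_one_le₀ (one_le_pow₀ hs1)
      have e3 : ‖s‖^(n+1) ≤ ‖s‖^N := pow_le_pow_right₀ hs1 hNn
      have e4 : ‖s‖^n ≤ ‖s‖^(n+1) := pow_le_pow_right₀ hs1 (Nat.le_succ n)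
      have low : ‖s‖^N - 1 ≤ ‖s ^ N + (s ^ N)⁻¹‖ := by
        have : ‖s ^ N‖ - ‖(s ^ N)⁻¹‖ ≤ ‖s ^ N + (s ^ N)⁻¹‖ := by
          calc ‖s ^ N‖ - ‖(s ^ N)⁻¹‖
              ≤ ‖s ^ N + (s ^ N)⁻¹ + -(s ^ N)⁻¹‖ - ‖(s ^ N)⁻¹‖ := by
                apply sub_le_sub_right; apply le_of_eq; congr 1; ring
            _ ≤ ‖s ^ N + (s ^ N)⁻¹‖ + ‖-(s ^ N)⁻¹‖ - ‖(s ^ N)⁻¹‖ := by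
                gcongr; exact norm_add_le _ _
            _ = ‖s ^ N + (s ^ N)⁻¹‖ := by rw [norm_neg]; ring
        rw [e1] at this
        linarith
      linarith
    have hsn : ‖s‖ = 1 := hnorm1 s hs0 hs1 (by rw [hsu]; intro k; exact (key k).1)
    have htn : ‖t‖ = 1 := hnorm1 t ht0 ht1 (by rw [htv]; intro k; exact (key k).2)
    have hus : u = ((2 * s.re : ℝ) : ℂ) := by
      rw [← hsu, Complex.inv_eq_conj hsn, Complex.add_conj]
    have hvt : v = ((2 * t.re : ℝ) : ℂ) := by
      rw [← htv, Complex.inv_eq_conj htn, Complex.add_conj]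
    have hsre : |s.re| ≤ 1 := by
      have := Complex.abs_re_le_norm s
      rw [hsn] at this
      exact this
    have htre : |t.re| ≤ 1 := by
      have := Complex.abs_re_le_norm t
      rw [htn] at this
      exact this
    obtain ⟨hs2, hs3⟩ := abs_le.mp hsre
    obtain ⟨ht2, ht3⟩ := abs_le.mp htre
    refine ⟨2 * s.re, 2 * t.re, ⟨by linarith, by linarith⟩, ⟨by linarith, by linarith⟩, ?_⟩
    rw [← hus, ← hvt]
    exact hz'
  · rintro ⟨u, v, hu, hv, hz⟩
    obtain ⟨s, hs1, hsu⟩ := KG_exists_unit u hu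
    obtain ⟨t, ht1, htv⟩ := KG_exists_unit v hv
    have hs0 : s ≠ 0 := by intro h; rw [h] at hs1; simp at hs1
    have ht0 : t ≠ 0 := by intro h; rw [h] at ht1; simp at ht1
    rw [isBounded_iff_forall_norm_le]
    refine ⟨29, ?_⟩
    rintro _ ⟨k, rfl⟩
    simp only
    rw [← hz, ← hsu, ← htv, iterG, cheb s hs0, cheb t ht0]
    apply KG_G_norm_le
    · calc ‖s ^ d ^ (k+1) + (s ^ d ^ (k+1))⁻¹‖
          ≤ ‖s ^ d ^ (k+1)‖ + ‖(s ^ d ^ (k+1))⁻¹‖ := norm_add_le _ _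
        _ ≤ 2 := by rw [norm_inv, norm_pow, hs1, one_pow]; norm_num
    · calc ‖t ^ d ^ (k+1) + (t ^ d ^ (k+1))⁻¹‖
          ≤ ‖t ^ d ^ (k+1)‖ + ‖(t ^ d ^ (k+1))⁻¹‖ := norm_add_le _ _
        _ ≤ 2 := by rw [norm_inv, norm_pow, ht1, one_pow]; norm_num
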